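/- Let c < 0, −2c²/9 < g ≤ 0 (so that c² + 4g > 0), ε ∈ {−1, 1}, and let d be a constant with φ₀^- < d < c/2. Let I be an open interval containing 0 and let φ : I → ℝ be differentiable with φ(0) = d such that for every ξ ∈ I: φ₀^- < φ(ξ) < c/2, φ(ξ)² + l₁φ(ξ) + l₂ > 0, 2√(φ(ξ)² + l₁φ(ξ) + l₂) + 2φ(ξ) + l₁ > 0, 2√(a₁)·√(φ(ξ)² + l₁φ(ξ) + l₂) + b₁φ(ξ) + l₃ > 0, and φ′(ξ) = ε·(φ(ξ) − φ₀^-)·√(φ(ξ)² + l₁φ(ξ) + l₂)/(2φ(ξ)). Then β₁(φ(ξ)) = β₁(d)·exp(εξ/2) for all ξ ∈ I. (The case ε = −1 is the kink-like wave solution φ₅ of equation (3.11), and ε = 1 is the antikink-like wave solution φ₆ of equation (3.12).) -/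

import Mathlib

set_option maxHeartbeats 1000000


/-- kink-like (ε = −1, eq. (3.11)) and antikink-like (ε = 1, eq. (3.12))
wave solutions of the osmosis K(2,2) equation for `c < 0`, `−2c²/9 < g ≤ 0`:
a solution of the orbit equation through `d ∈ (φ₀^-, c/2)` satisfies
`β₁(φ(ξ)) = β₁(d)·exp(εξ/2)`. -/
theorem osmosis_K22_kink_like_c_neg_g_nonpos
    (c g : ℝ) (hc : c < 0) (hg1 : -2 * c ^ 2 / 9 < g) (hg2 : g ≤ 0)
    (ε : ℝ) (hε : ε = -1 ∨ ε = 1)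
    (s φ0m l1 l2 l3 a1 b1 α1 : ℝ)
    (hs : s = Real.sqrt (c ^ 2 + 4 * g))
    (hφ0m : φ0m = (c - s) / 2)
    (hl1 : l1 = -(c + 3 * s) / 3)
    (hl2 : l2 = (c ^ 2 + 6 * g - c * s) / 6)
    (hl3 : l3 = (2 / 3) * (c ^ 2 + 6 * g - c * s))
    (ha1 : a1 = c ^ 2 + 4 * g - c * s)
    (hb1 : b1 = (2 * c - 6 * s) / 3)
    (hα1 : α1 = (c - s) / (2 * Real.sqrt a1))
    (β₁ : ℝ → ℝ)
    (hβ₁ : ∀ x : ℝ, β₁ x =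
      (2 * Real.sqrt (x ^ 2 + l1 * x + l2) + 2 * x + l1) * (x - φ0m) ^ α1 /
        (2 * Real.sqrt a1 * Real.sqrt (x ^ 2 + l1 * x + l2) + b1 * x + l3) ^ α1)
    (d : ℝ) (hd : φ0m < d ∧ d < c / 2)
    (I : Set ℝ) (hI : IsOpen I) (hIconv : Convex ℝ I) (h0I : (0:ℝ) ∈ I)
    (φ : ℝ → ℝ) (hφ0 : φ 0 = d)
    (hrange : ∀ ξ ∈ I, φ0m < φ ξ ∧ φ ξ < c / 2)
    (hq : ∀ ξ ∈ I, 0 < (φ ξ) ^ 2 + l1 * φ ξ + l2)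
    (hnum : ∀ ξ ∈ I, 0 < 2 * Real.sqrt ((φ ξ) ^ 2 + l1 * φ ξ + l2) + 2 * φ ξ + l1)
    (hden : ∀ ξ ∈ I,
      0 < 2 * Real.sqrt a1 * Real.sqrt ((φ ξ) ^ 2 + l1 * φ ξ + l2) + b1 * φ ξ + l3)
    (horb : ∀ ξ ∈ I, HasDerivAt φ
      (ε * (φ ξ - φ0m) * Real.sqrt ((φ ξ) ^ 2 + l1 * φ ξ + l2) / (2 * φ ξ)) ξ) :
    ∀ ξ ∈ I, β₁ (φ ξ) = β₁ d * Real.exp (ε * ξ / 2) := by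
  have hcg : 0 < c ^ 2 + 4 * g := by nlinarith
  have hs2 : s ^ 2 = c ^ 2 + 4 * g := by rw [hs]; exact Real.sq_sqrt hcg.le
  have hspos : 0 < s := by rw [hs]; exact Real.sqrt_pos.mpr hcg
  have ha1pos : 0 < a1 := by nlinarith
  set sa := Real.sqrt a1 with hsadef
  have hsapos : 0 < sa := Real.sqrt_pos.mpr ha1pos
  have hsa2 : sa ^ 2 = a1 := Real.sq_sqrt ha1pos.le
  have hφ0mneg : φ0m < 0 := by rw [hφ0m]; linarith
  have hcoefA : l1 + 2 * φ0m - b1 = 0 := by rw [hl1, hφ0m, hb1]; ring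
  have hcoefB : 2 * l2 + φ0m * l1 - l3 = 0 := by
    rw [hl2, hφ0m, hl1, hl3]; linear_combination (1/2 : ℝ) * hs2
  have hcoefC : l3 + φ0m * b1 - 2 * a1 = 0 := by
    rw [hl3, hφ0m, hb1, ha1]; linear_combination hs2
  have hα1sa : α1 * sa = φ0m := by
    have hsane : sa ≠ 0 := ne_of_gt hsapos
    rw [hα1, hφ0m]; field_simp
  set F : ℝ → ℝ := fun x =>
    (2 * Real.sqrt ((φ x) ^ 2 + l1 * φ x + l2) + 2 * φ x + l1) * (φ x - φ0m) ^ α1 /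
      (2 * sa * Real.sqrt ((φ x) ^ 2 + l1 * φ x + l2) + b1 * φ x + l3) ^ α1 *
      Real.exp (-(ε / 2) * x) with hF
  have hderiv : ∀ t ∈ I, HasDerivAt F 0 t := by
    intro t ht
    obtain ⟨hPt, hut⟩ := hrange t ht
    have hqt := hq t ht
    have hNt := hnum t ht
    have hDt := hden t ht
    set u : ℝ := φ t with hu
    have huneg : u < 0 := lt_trans hut (by linarith)
    have hune : u ≠ 0 := ne_of_lt huneg
    set r : ℝ := Real.sqrt (u ^ 2 + l1 * u + l2) with hr
    have hrpos : 0 < r := Real.sqrt_pos.mpr hqt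
    have hrne : r ≠ 0 := ne_of_gt hrpos
    have hr2 : r ^ 2 = u ^ 2 + l1 * u + l2 := Real.sq_sqrt hqt.le
    have hPpos : 0 < u - φ0m := sub_pos.mpr hPt
    have hPne : u - φ0m ≠ 0 := ne_of_gt hPpos
    have hDne : 2 * sa * r + b1 * u + l3 ≠ 0 := ne_of_gt hDt
    set u' : ℝ := ε * (u - φ0m) * r / (2 * u) with hu'
    have hφd : HasDerivAt φ u' t := horb t ht
    have hQd : HasDerivAt (fun x => (φ x) ^ 2 + l1 * φ x + l2) (2 * u * u' + l1 * u') t := by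
      have h := ((hφd.pow 2).add (hφd.const_mul l1)).add_const l2
      exact h.congr_deriv (by rw [hu]; push_cast; ring)
    have hrd : HasDerivAt (fun x => Real.sqrt ((φ x) ^ 2 + l1 * φ x + l2))
        ((2 * u * u' + l1 * u') / (2 * r)) t := hQd.sqrt (ne_of_gt hqt)
    have hAd : HasDerivAt
        (fun x => 2 * Real.sqrt ((φ x) ^ 2 + l1 * φ x + l2) + 2 * φ x + l1)
        (2 * ((2 * u * u' + l1 * u') / (2 * r)) + 2 * u') t :=
      ((hrd.const_mul 2).add (hφd.const_mul 2)).add_const l1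
    have hBd : HasDerivAt (fun x => (φ x - φ0m) ^ α1)
        (u' * α1 * (u - φ0m) ^ (α1 - 1)) t :=
      (hφd.sub_const φ0m).rpow_const (Or.inl hPne)
    have hDd : HasDerivAt
        (fun x => 2 * sa * Real.sqrt ((φ x) ^ 2 + l1 * φ x + l2) + b1 * φ x + l3)
        (2 * sa * ((2 * u * u' + l1 * u') / (2 * r)) + b1 * u') t :=
      ((hrd.const_mul (2 * sa)).add (hφd.const_mul b1)).add_const l3
    have hCd : HasDerivAt
        (fun x => (2 * sa * Real.sqrt ((φ x) ^ 2 + l1 * φ x + l2) + b1 * φ x + l3) ^ α1)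
        ((2 * sa * ((2 * u * u' + l1 * u') / (2 * r)) + b1 * u') * α1 *
          (2 * sa * r + b1 * u + l3) ^ (α1 - 1)) t :=
      hDd.rpow_const (Or.inl hDne)
    have hed : HasDerivAt (fun x : ℝ => Real.exp (-(ε / 2) * x))
        (Real.exp (-(ε / 2) * t) * (-(ε / 2))) t :=
      by simpa using ((hasDerivAt_id t).const_mul (-(ε / 2))).exp
    have hCvpos : (0:ℝ) < (2 * sa * r + b1 * u + l3) ^ α1 := Real.rpow_pos_of_pos hDt α1
    have hBpos : (0:ℝ) < (u - φ0m) ^ α1 := Real.rpow_pos_of_pos hPpos α1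
    have hFd : HasDerivAt F
        ((((2 * ((2 * u * u' + l1 * u') / (2 * r)) + 2 * u') * (u - φ0m) ^ α1 +
            (2 * r + 2 * u + l1) * (u' * α1 * (u - φ0m) ^ (α1 - 1))) *
              (2 * sa * r + b1 * u + l3) ^ α1 -
            (2 * r + 2 * u + l1) * (u - φ0m) ^ α1 *
              ((2 * sa * ((2 * u * u' + l1 * u') / (2 * r)) + b1 * u') * α1 *
                (2 * sa * r + b1 * u + l3) ^ (α1 - 1))) /
            ((2 * sa * r + b1 * u + l3) ^ α1) ^ 2 *
            Real.exp (-(ε / 2) * t) +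
          (2 * r + 2 * u + l1) * (u - φ0m) ^ α1 / (2 * sa * r + b1 * u + l3) ^ α1 *
            (Real.exp (-(ε / 2) * t) * (-(ε / 2)))) t := by
      exact ((hAd.mul hBd).div hCd (ne_of_gt hCvpos)).mul hed
    rw [Real.rpow_sub_one hPne α1, Real.rpow_sub_one hDne α1] at hFd
    have hKey : r * (2 * sa * r + b1 * u + l3) -
        (u - φ0m) * (sa * (2 * u + l1) + b1 * r) = sa * (2 * sa * r + b1 * u + l3) := by
      linear_combination sa * u * hcoefA + sa * hcoefB + r * hcoefC + 2 * sa * hr2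
        - 2 * r * hsa2
    have hbig : (u - φ0m) * (2 * sa * r + b1 * u + l3) +
        α1 * r * (2 * sa * r + b1 * u + l3) -
        α1 * (u - φ0m) * (sa * (2 * u + l1) + b1 * r) = u * (2 * sa * r + b1 * u + l3) := by
      linear_combination α1 * hKey + (2 * sa * r + b1 * u + l3) * hα1sa
    have hbr : u' / r + α1 * u' / (u - φ0m) -
        α1 * (2 * sa * ((2 * u * u' + l1 * u') / (2 * r)) + b1 * u') /
          (2 * sa * r + b1 * u + l3) - ε / 2 = 0 := by
      rw [hu']
      field_simp
      have hD' : r * 2 * sa + u * b1 + l3 ≠ 0 := by intro h; apply hDne; linarith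
      have hX : (u - φ0m) * α1 * (sa * (u * 2 + l1) + r * b1) / (r * 2 * sa + u * b1 + l3) =
          (u - φ0m) + r * α1 - u := by
        rw [div_eq_iff hD']; linear_combination -hbig
      rw [hX]; ring
    have hzero : (((2 * ((2 * u * u' + l1 * u') / (2 * r)) + 2 * u') * (u - φ0m) ^ α1 +
            (2 * r + 2 * u + l1) * (u' * α1 * ((u - φ0m) ^ α1 / (u - φ0m)))) *
              (2 * sa * r + b1 * u + l3) ^ α1 -
            (2 * r + 2 * u + l1) * (u - φ0m) ^ α1 *
              ((2 * sa * ((2 * u * u' + l1 * u') / (2 * r)) + b1 * u') * α1 *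
                ((2 * sa * r + b1 * u + l3) ^ α1 / (2 * sa * r + b1 * u + l3)))) /
            ((2 * sa * r + b1 * u + l3) ^ α1) ^ 2 *
            Real.exp (-(ε / 2) * t) +
          (2 * r + 2 * u + l1) * (u - φ0m) ^ α1 / (2 * sa * r + b1 * u + l3) ^ α1 *
            (Real.exp (-(ε / 2) * t) * (-(ε / 2))) = 0 := by
      have hfac : (((2 * ((2 * u * u' + l1 * u') / (2 * r)) + 2 * u') * (u - φ0m) ^ α1 +
            (2 * r + 2 * u + l1) * (u' * α1 * ((u - φ0m) ^ α1 / (u - φ0m)))) *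
              (2 * sa * r + b1 * u + l3) ^ α1 -
            (2 * r + 2 * u + l1) * (u - φ0m) ^ α1 *
              ((2 * sa * ((2 * u * u' + l1 * u') / (2 * r)) + b1 * u') * α1 *
                ((2 * sa * r + b1 * u + l3) ^ α1 / (2 * sa * r + b1 * u + l3)))) /
            ((2 * sa * r + b1 * u + l3) ^ α1) ^ 2 *
            Real.exp (-(ε / 2) * t) +
          (2 * r + 2 * u + l1) * (u - φ0m) ^ α1 / (2 * sa * r + b1 * u + l3) ^ α1 *
            (Real.exp (-(ε / 2) * t) * (-(ε / 2))) =
          (Real.exp (-(ε / 2) * t) * (2 * r + 2 * u + l1) * (u - φ0m) ^ α1 /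
              (2 * sa * r + b1 * u + l3) ^ α1) *
            (u' / r + α1 * u' / (u - φ0m) -
              α1 * (2 * sa * ((2 * u * u' + l1 * u') / (2 * r)) + b1 * u') /
                (2 * sa * r + b1 * u + l3) - ε / 2) := by
        set B : ℝ := (u - φ0m) ^ α1 with hBdef
        set Cv : ℝ := (2 * sa * r + b1 * u + l3) ^ α1 with hCvdef
        set e : ℝ := Real.exp (-(ε / 2) * t) with hedef
        have hCvne : Cv ≠ 0 := ne_of_gt hCvpos
        have hene : e ≠ 0 := Real.exp_ne_zero _
        field_simp
        ring
      rw [hfac, hbr, mul_zero]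
    rw [hzero] at hFd
    exact hFd
  intro ξ hξ
  have hconst : F ξ = F 0 := by
    have h := Convex.norm_image_sub_le_of_norm_hasDerivWithin_le
      (C := (0:ℝ)) (f' := fun _ : ℝ => (0:ℝ)) (fun z hz => (hderiv z hz).hasDerivWithinAt)
      (fun z _ => by simp) hIconv h0I hξ
    have h2 : F ξ - F 0 = 0 := by simpa using h
    linarith
  have hFξ : F ξ = β₁ (φ ξ) * Real.exp (-(ε / 2) * ξ) := by
    rw [hF]; rw [hβ₁ (φ ξ)]
  have hF0 : F 0 = β₁ d := by
    rw [hF]; simp [hφ0, hβ₁ d]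
  have hexp : Real.exp (-(ε / 2) * ξ) * Real.exp (ε * ξ / 2) = 1 := by
    rw [← Real.exp_add]; ring_nf; exact Real.exp_zero
  calc β₁ (φ ξ) = β₁ (φ ξ) * (Real.exp (-(ε / 2) * ξ) * Real.exp (ε * ξ / 2)) := by
        rw [hexp, mul_one]
    _ = (F ξ) * Real.exp (ε * ξ / 2) := by rw [hFξ]; ring
    _ = β₁ d * Real.exp (ε * ξ / 2) := by rw [hconst, hF0]
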